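/- If Γ is a d-chordal simplicial complex on [n] and W ⊆ [n], then the induced subcomplex Γ_W is d-chordal; consequently induced subcomplexes of chordal complexes are chordal. -/

import Mathlib

namespace ChordalPaper

/-- A simplicial complex on vertex set `Fin n`: a family of finsets closed under subsets. -/
def IsComplex {n : ℕ} (Γ : Set (Finset (Fin n))) : Prop :=
  ∀ F ∈ Γ, ∀ F' ⊆ F, F' ∈ Γ

/-- The `d`-closure `Δ_d(Γ)`: all subsets of size `≤ d`, together with all subsets
all of whose `(d+1)`-element subsets are faces of `Γ`. -/
def dClosure {n : ℕ} (d : ℕ) (Γ : Set (Finset (Fin n))) : Set (Finset (Fin n)) :=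
  {F | F.card ≤ d ∨ ∀ G ⊆ F, G.card = d + 1 → G ∈ Γ}

/-- The pure `(d-1)`-skeleton `⟨[n]⟩^{[d-1]}` of the full simplex: all subsets of size `≤ d`. -/
def fullSkel (n d : ℕ) : Set (Finset (Fin n)) := {F | F.card ≤ d}

/-- A facet: a maximal face. -/
def IsFacet {n : ℕ} (Γ : Set (Finset (Fin n))) (F : Finset (Fin n)) : Prop :=
  F ∈ Γ ∧ ∀ G ∈ Γ, F ⊆ G → G = F

/-- A free face: a face contained in a unique facet. -/
def IsFreeFace {n : ℕ} (Γ : Set (Finset (Fin n))) (E : Finset (Fin n)) : Prop :=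
  E ∈ Γ ∧ ∃! F, IsFacet Γ F ∧ E ⊆ F

/-- Collapse at `E`: remove all faces containing `E` (including `E` itself). -/
def collapseFace {n : ℕ} (Γ : Set (Finset (Fin n))) (E : Finset (Fin n)) :
    Set (Finset (Fin n)) := {F ∈ Γ | ¬ E ⊆ F}

/-- Successive collapses along a list of faces. -/
def collapseList {n : ℕ} (Γ : Set (Finset (Fin n))) :
    List (Finset (Fin n)) → Set (Finset (Fin n))
  | [] => Γ
  | E :: L => collapseList (collapseFace Γ E) L

/-- A free sequence: each face is free in the complex obtained by collapsing the previous ones. -/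
def IsFreeSeq {n : ℕ} (Γ : Set (Finset (Fin n))) : List (Finset (Fin n)) → Prop
  | [] => True
  | E :: L => IsFreeFace Γ E ∧ IsFreeSeq (collapseFace Γ E) L

/-- `d`-collapsibility: a sequence of elementary `d`-collapsings (at free faces of
dimension `< d`, i.e. cardinality `≤ d`) reduces `Γ` to the void complex. -/
def Collapsible {n : ℕ} (d : ℕ) (Γ : Set (Finset (Fin n))) : Prop :=
  ∃ L : List (Finset (Fin n)),
    IsFreeSeq Γ L ∧ (∀ E ∈ L, E.card ≤ d) ∧ collapseList Γ L = ∅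

/-- Simplicial deletion `Γ∖E`: remove all faces strictly containing `E` (keeping `E`). -/
def srDel {n : ℕ} (Γ : Set (Finset (Fin n))) (E : Finset (Fin n)) :
    Set (Finset (Fin n)) := {F ∈ Γ | ¬ E ⊂ F}

/-- Successive simplicial deletions along a list of faces. -/
def srDelList {n : ℕ} (Γ : Set (Finset (Fin n))) :
    List (Finset (Fin n)) → Set (Finset (Fin n))
  | [] => Γ
  | E :: L => srDelList (srDel Γ E) L

/-- A simplicial order for a `d`-closure on `Fin n`: a sequence of non-facet free faces of
cardinality `d` whose successive simplicial deletions reduce the complex to the pure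
`(d-1)`-skeleton of the full simplex. -/
def IsSimpOrder {n : ℕ} (d : ℕ) (Γ : Set (Finset (Fin n))) :
    List (Finset (Fin n)) → Prop
  | [] => Γ = fullSkel n d
  | E :: L => E.card = d ∧ IsFreeFace Γ E ∧ ¬ IsFacet Γ E ∧ IsSimpOrder d (srDel Γ E) L

/-- `Γ` is `d`-chordal: its `d`-closure equals the pure `(d-1)`-skeleton of the full
simplex or admits a simplicial order. -/
def DChordal {n : ℕ} (d : ℕ) (Γ : Set (Finset (Fin n))) : Prop :=
  ∃ L, IsSimpOrder d (dClosure d Γ) L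

/-- A minimal nonface of `Γ`. -/
def IsMinNonface {n : ℕ} (Γ : Set (Finset (Fin n))) (F : Finset (Fin n)) : Prop :=
  F ∉ Γ ∧ ∀ G ⊂ F, G ∈ Γ

end ChordalPaper

namespace ChordalPaper

/-- Induced subcomplex on a vertex set `W`. -/
def induced {n : ℕ} (Γ : Set (Finset (Fin n))) (W : Finset (Fin n)) :
    Set (Finset (Fin n)) := {F ∈ Γ | F ⊆ W}

/-- The `d`-closure relative to the vertex set `W`. -/
def dClosureOn {n : ℕ} (W : Finset (Fin n)) (d : ℕ) (Γ : Set (Finset (Fin n))) :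
    Set (Finset (Fin n)) :=
  {F | F ⊆ W ∧ (F.card ≤ d ∨ ∀ G ⊆ F, G.card = d + 1 → G ∈ Γ)}

/-- The pure `(d-1)`-skeleton of the full simplex on vertex set `W`. -/
def skelOn {n : ℕ} (W : Finset (Fin n)) (d : ℕ) : Set (Finset (Fin n)) :=
  {F | F ⊆ W ∧ F.card ≤ d}

/-- A simplicial order relative to the vertex set `W`. -/
def IsSimpOrderOn {n : ℕ} (W : Finset (Fin n)) (d : ℕ) (Γ : Set (Finset (Fin n))) :
    List (Finset (Fin n)) → Prop
  | [] => Γ = skelOn W d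
  | E :: L => E.card = d ∧ IsFreeFace Γ E ∧ ¬ IsFacet Γ E ∧ IsSimpOrderOn W d (srDel Γ E) L

/-- `d`-chordality as a complex on the vertex set `W`. -/
def DChordalOn {n : ℕ} (W : Finset (Fin n)) (d : ℕ) (Γ : Set (Finset (Fin n))) : Prop :=
  ∃ L, IsSimpOrderOn W d (dClosureOn W d Γ) L

end ChordalPaper

namespace ChordalPaper

lemma srDel_isComplex {n : ℕ} {Δ : Set (Finset (Fin n))} (h : IsComplex Δ)
    (E : Finset (Fin n)) : IsComplex (srDel Δ E) := by
  intro F hF F' hF'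
  exact ⟨h F hF.1 F' hF', fun hc => hF.2 (lt_of_lt_of_le hc hF')⟩

lemma induced_srDel {n : ℕ} (Δ : Set (Finset (Fin n))) (E W : Finset (Fin n)) :
    induced (srDel Δ E) W = srDel (induced Δ W) E := by
  ext F; simp only [induced, srDel, Set.mem_setOf_eq]; tauto

lemma induced_srDel_not_sub {n : ℕ} (Δ : Set (Finset (Fin n))) {E W : Finset (Fin n)}
    (h : ¬ E ⊆ W) : induced (srDel Δ E) W = induced Δ W := by
  ext F
  simp only [induced, srDel, Set.mem_setOf_eq]
  constructor
  · rintro ⟨⟨h1, _⟩, h2⟩; exact ⟨h1, h2⟩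
  · rintro ⟨h1, h2⟩
    exact ⟨⟨h1, fun hc => h (hc.subset.trans h2)⟩, h2⟩

lemma exists_facet {n : ℕ} {Δ : Set (Finset (Fin n))} {G : Finset (Fin n)} (hG : G ∈ Δ) :
    ∃ F, IsFacet Δ F ∧ G ⊆ F := by
  obtain ⟨F, ⟨hFΔ, hGF⟩, hmax⟩ := Set.Finite.exists_maximalFor id {F | F ∈ Δ ∧ G ⊆ F}
    (Set.toFinite _) ⟨G, hG, subset_rfl⟩
  exact ⟨F, ⟨hFΔ, fun H hH hFH => subset_antisymm (hmax ⟨hH, hGF.trans hFH⟩ hFH) hFH⟩, hGF⟩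

lemma freeFace_induced {n : ℕ} {Δ : Set (Finset (Fin n))} (hΔ : IsComplex Δ)
    {E W : Finset (Fin n)} (hEW : E ⊆ W) (hE : IsFreeFace Δ E) :
    IsFreeFace (induced Δ W) E := by
  obtain ⟨hEΔ, F, ⟨hF, hEF⟩, huniq⟩ := hE
  have hFW : F ∩ W ∈ induced Δ W :=
    ⟨hΔ F hF.1 _ Finset.inter_subset_left, Finset.inter_subset_right⟩
  have hEFW : E ⊆ F ∩ W := Finset.subset_inter hEF hEW
  have hsub : ∀ G ∈ induced Δ W, E ⊆ G → G ⊆ F ∩ W := by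
    intro G hG hEG
    obtain ⟨F', hF', hGF'⟩ := exists_facet hG.1
    have := huniq F' ⟨hF', hEG.trans hGF'⟩
    exact Finset.subset_inter (this ▸ hGF') hG.2
  refine ⟨⟨hEΔ, hEW⟩, F ∩ W, ⟨⟨hFW, ?_⟩, hEFW⟩, ?_⟩
  · intro G hG hFWG
    exact subset_antisymm (hsub G hG (hEFW.trans hFWG)) hFWG
  · rintro G ⟨hGfac, hEG⟩
    exact (hGfac.2 _ hFW (hsub G hGfac.1 hEG)).symm

lemma srDel_of_facet {n : ℕ} {Δ : Set (Finset (Fin n))} {E : Finset (Fin n)}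
    (h : IsFacet Δ E) : srDel Δ E = Δ := by
  ext F
  refine ⟨fun hF => hF.1, fun hF => ⟨hF, fun hc => ?_⟩⟩
  exact hc.ne (h.2 F hF hc.subset).symm

lemma key_ind {n : ℕ} (W : Finset (Fin n)) (d : ℕ) :
    ∀ (L : List (Finset (Fin n))) (Δ : Set (Finset (Fin n))), IsComplex Δ →
      IsSimpOrderOn Finset.univ d Δ L → ∃ L', IsSimpOrderOn W d (induced Δ W) L' := by
  intro L
  induction L with
  | nil =>
    intro Δ _ hord
    refine ⟨[], ?_⟩
    show induced Δ W = skelOn W d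
    rw [show Δ = skelOn Finset.univ d from hord]
    ext F
    simp only [induced, skelOn, Set.mem_setOf_eq]
    constructor
    · rintro ⟨⟨_, h2⟩, h3⟩; exact ⟨h3, h2⟩
    · rintro ⟨h1, h2⟩; exact ⟨⟨Finset.subset_univ _, h2⟩, h1⟩
  | cons E L ih =>
    intro Δ hΔ hord
    obtain ⟨hcard, hfree, hnfac, hrest⟩ := hord
    obtain ⟨L', hL'⟩ := ih (srDel Δ E) (srDel_isComplex hΔ E) hrest
    by_cases hEW : E ⊆ W
    · by_cases hfac : IsFacet (induced Δ W) E
      · refine ⟨L', ?_⟩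
        rwa [induced_srDel, srDel_of_facet hfac] at hL'
      · refine ⟨E :: L', hcard, freeFace_induced hΔ hEW hfree, hfac, ?_⟩
        rwa [induced_srDel] at hL'
    · exact ⟨L', by rwa [induced_srDel_not_sub Δ hEW] at hL'⟩

lemma dClosureOn_isComplex {n : ℕ} (d : ℕ) (Γ : Set (Finset (Fin n))) :
    IsComplex (dClosureOn Finset.univ d Γ) := by
  rintro F ⟨_, hF⟩ F' hF'
  refine ⟨Finset.subset_univ _, ?_⟩
  rcases hF with h | h
  · exact Or.inl ((Finset.card_le_card hF').trans h)
  · exact Or.inr fun G hG hGc => h G (hG.trans hF') hGc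

lemma dClosureOn_induced {n : ℕ} (d : ℕ) (Γ : Set (Finset (Fin n))) (W : Finset (Fin n)) :
    dClosureOn W d (induced Γ W) = induced (dClosureOn Finset.univ d Γ) W := by
  ext F
  simp only [dClosureOn, induced, Set.mem_setOf_eq]
  constructor
  · rintro ⟨hFW, h⟩
    refine ⟨⟨Finset.subset_univ _, ?_⟩, hFW⟩
    rcases h with h | h
    · exact Or.inl h
    · exact Or.inr fun G hG hGc => (h G hG hGc).1
  · rintro ⟨⟨_, h⟩, hFW⟩
    refine ⟨hFW, ?_⟩
    rcases h with h | h
    · exact Or.inl h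
    · exact Or.inr fun G hG hGc => ⟨h G hG hGc, hG.trans hFW⟩

lemma key {n : ℕ} (d : ℕ) (Γ : Set (Finset (Fin n))) (W : Finset (Fin n)) :
    DChordalOn Finset.univ d Γ → DChordalOn W d (induced Γ W) := by
  rintro ⟨L, hL⟩
  obtain ⟨L', hL'⟩ := key_ind W d L (dClosureOn Finset.univ d Γ)
    (dClosureOn_isComplex d Γ) hL
  exact ⟨L', by rwa [dClosureOn_induced]⟩

end ChordalPaper

open ChordalPaper in
/-- if `Γ` (a complex on `[n]`) is `d`-chordal then the induced
subcomplex `Γ_W` is `d`-chordal; consequently induced subcomplexes of chordal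
complexes are chordal. -/
theorem stmt16 (n d : ℕ) (hd : 1 ≤ d) (Γ : Set (Finset (Fin n))) (hΓ : IsComplex Γ)
    (W : Finset (Fin n)) :
    (DChordalOn Finset.univ d Γ → DChordalOn W d (induced Γ W)) ∧
    ((∀ e, 1 ≤ e → DChordalOn Finset.univ e Γ) →
      ∀ e, 1 ≤ e → DChordalOn W e (induced Γ W)) := by
  exact ⟨key d Γ W, fun h e he => key e Γ W (h e he)⟩
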